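/- Let Γ be a countable group acting on a countable set I such that every orbit Γ·i is infinite, let X₀ be a standard Borel space and μ₀ a probability measure on X₀, and let μ = μ₀^{⊗I} be the product probability measure on X₀^I. Then the generalized Bernoulli action is weakly mixing in the following sense: every finite-dimensional subspace V of L²(X₀^I, μ) that is invariant under all Koopman operators f ↦ f ∘ T_g (g ∈ Γ) consists of functions that are constant μ-almost everywhere. -/

import Mathlib

set_option linter.unusedSectionVars false
set_option maxHeartbeats 1000000

open MeasureTheory

open Filter Set ProbabilityTheory MulAction
open scoped ENNReal Topology ComplexConjugate symmDiff Pointwise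

noncomputable section BernoulliAux

namespace BernoulliAux

variable {I X₀ : Type*} [MeasurableSpace X₀]

/-- Measurable rectangles (cylinder sets with measurable sides). -/
def Rect (I X₀ : Type*) [MeasurableSpace X₀] : Set (Set (I → X₀)) :=
  {S | ∃ (s : Finset I) (f : I → Set X₀), (∀ i, MeasurableSet (f i)) ∧
    S = {x | ∀ i ∈ s, x i ∈ f i}}

lemma isPiSystem_rect : IsPiSystem (Rect I X₀) := by
  classical
  rintro S ⟨s, f, hf, rfl⟩ T ⟨t, k, hk, rfl⟩ -
  refine ⟨s ∪ t, fun i => (if i ∈ s then f i else univ) ∩ (if i ∈ t then k i else univ),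
    fun i => MeasurableSet.inter (by split <;> [exact hf i; exact MeasurableSet.univ])
      (by split <;> [exact hk i; exact MeasurableSet.univ]), ?_⟩
  ext x
  simp only [mem_inter_iff, mem_setOf_eq, Finset.mem_union]
  constructor
  · rintro ⟨h1, h2⟩ i hi
    constructor
    · by_cases h : i ∈ s
      · simpa [h] using h1 i h
      · simp [h]
    · by_cases h : i ∈ t
      · simpa [h] using h2 i h
      · simp [h]
  · intro h
    constructor
    · intro i hi
      have := (h i (Or.inl hi)).1
      simpa [hi] using this
    · intro i hi
      have := (h i (Or.inr hi)).2
      simpa [hi] using this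

lemma measurableSet_rect {s : Finset I} {f : I → Set X₀} (hf : ∀ i, MeasurableSet (f i)) :
    MeasurableSet {x : I → X₀ | ∀ i ∈ s, x i ∈ f i} := by
  have : {x : I → X₀ | ∀ i ∈ s, x i ∈ f i} = ⋂ i ∈ s, (fun x : I → X₀ => x i) ⁻¹' f i := by
    ext x; simp
  rw [this]
  exact MeasurableSet.biInter s.countable_toSet
    (fun i _ => measurable_pi_apply i (hf i))

lemma measurableSet_rect_cylE {s : Finset I} {f : I → Set X₀} (hf : ∀ i, MeasurableSet (f i)) :
    MeasurableSet[cylinderEvents (↑s : Set I)] {x : I → X₀ | ∀ i ∈ s, x i ∈ f i} := by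
  have : {x : I → X₀ | ∀ i ∈ s, x i ∈ f i} = ⋂ i ∈ s, (fun x : I → X₀ => x i) ⁻¹' f i := by
    ext x; simp
  rw [this]
  exact MeasurableSet.biInter s.countable_toSet
    (fun i hi => measurable_cylinderEvent_apply (by exact_mod_cast hi) (hf i))

lemma pi_eq_generateFrom_rect :
    (MeasurableSpace.pi : MeasurableSpace (I → X₀)) =
      MeasurableSpace.generateFrom (Rect I X₀) := by
  refine le_antisymm ?_ (MeasurableSpace.generateFrom_le ?_)
  · rw [show (MeasurableSpace.pi : MeasurableSpace (I → X₀)) =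
        ⨆ i, MeasurableSpace.comap (fun x : I → X₀ => x i) inferInstance from rfl]
    refine iSup_le fun i => ?_
    refine Measurable.comap_le (fun B hB => ?_)
    refine MeasurableSpace.measurableSet_generateFrom ⟨{i}, fun _ => B, fun _ => hB, ?_⟩
    ext x; simp
  · rintro S ⟨s, f, hf, rfl⟩
    exact measurableSet_rect hf

section Measure

variable (μ₀ : Measure X₀) [IsProbabilityMeasure μ₀]
variable (μ : Measure (I → X₀)) [IsProbabilityMeasure μ]

/-- Shorthand for the product-measure hypothesis. -/
def ProdHyp : Prop :=
  ∀ (s : Finset I) (f : I → Set X₀), (∀ i, MeasurableSet (f i)) →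
    μ {x : I → X₀ | ∀ i ∈ s, x i ∈ f i} = ∏ i ∈ s, μ₀ (f i)

variable {μ₀ μ}

lemma measurePreserving_shift {Γ : Type*} [Group Γ] [MulAction Γ I]
    (hμ : ProdHyp μ₀ μ) (γ : Γ) :
    MeasurePreserving (fun (x : I → X₀) (i : I) => x (γ⁻¹ • i)) μ μ := by
  classical
  have hTmeas : Measurable (fun (x : I → X₀) (i : I) => x (γ⁻¹ • i)) :=
    measurable_pi_lambda _ fun i => measurable_pi_apply _
  refine ⟨hTmeas, ?_⟩
  haveI : IsProbabilityMeasure (μ.map (fun (x : I → X₀) (i : I) => x (γ⁻¹ • i))) :=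
    Measure.isProbabilityMeasure_map hTmeas.aemeasurable
  refine MeasureTheory.ext_of_generate_finite (Rect I X₀) pi_eq_generateFrom_rect
    isPiSystem_rect ?_ (by simp)
  rintro S ⟨s, f, hf, rfl⟩
  rw [Measure.map_apply hTmeas (measurableSet_rect hf)]
  have hpre : (fun (x : I → X₀) (i : I) => x (γ⁻¹ • i)) ⁻¹' {x | ∀ i ∈ s, x i ∈ f i}
      = {x | ∀ j ∈ s.image (fun i => γ⁻¹ • i), x j ∈ f (γ • j)} := by
    ext x
    simp only [mem_preimage, mem_setOf_eq, Finset.mem_image]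
    constructor
    · rintro h j ⟨i, hi, rfl⟩
      rw [smul_inv_smul]
      exact h i hi
    · intro h i hi
      have := h (γ⁻¹ • i) ⟨i, hi, rfl⟩
      rwa [smul_inv_smul] at this
  rw [hpre, hμ _ _ (fun j => hf _), hμ _ _ hf]
  rw [Finset.prod_image (by intro a _ b _ hab; exact smul_left_cancel _ hab)]
  exact Finset.prod_congr rfl fun i _ => by rw [smul_inv_smul]

lemma iIndep_eval (hμ : ProdHyp μ₀ μ) :
    iIndep (fun i : I => MeasurableSpace.comap (fun x : I → X₀ => x i) inferInstance) μ := by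
  classical
  rw [iIndep_iff]
  intro s f hf
  have h' : ∀ i ∈ s, ∃ B : Set X₀, MeasurableSet B ∧ (fun x : I → X₀ => x i) ⁻¹' B = f i :=
    fun i hi => hf i hi
  choose! B hBm hBe using h'
  set C : I → Set X₀ := fun i => if i ∈ s then B i else univ with hC
  have hCm : ∀ i, MeasurableSet (C i) := by
    intro i
    by_cases h : i ∈ s
    · simpa [hC, h] using hBm i h
    · simp [hC, h]
  have hset : (⋂ i ∈ s, f i) = {x : I → X₀ | ∀ i ∈ s, x i ∈ C i} := by
    ext x
    simp only [mem_iInter, mem_setOf_eq]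
    refine forall₂_congr fun i hi => ?_
    rw [← hBe i hi]
    simp [hC, hi]
  rw [hset, hμ _ _ hCm]
  refine Finset.prod_congr rfl fun i hi => ?_
  have : f i = {x : I → X₀ | ∀ j ∈ ({i} : Finset I), x j ∈ C j} := by
    ext x
    simp [hC, hi, ← hBe i hi]
  rw [this, hμ _ _ hCm, Finset.prod_singleton]

lemma indep_cylE (hμ : ProdHyp μ₀ μ) {A B : Set I} (hAB : Disjoint A B) :
    Indep (cylinderEvents (X := fun _ : I => X₀) A)
      (cylinderEvents (X := fun _ : I => X₀) B) μ :=
  indep_iSup_of_disjoint (fun i => (measurable_pi_apply i).comap_le) (iIndep_eval hμ) hAB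

lemma indepFun_of_cylE (hμ : ProdHyp μ₀ μ) {A B : Set I} (hAB : Disjoint A B)
    {β : Type*} [MeasurableSpace β] {p q : (I → X₀) → β}
    (hp : Measurable[cylinderEvents A] p) (hq : Measurable[cylinderEvents B] q) :
    IndepFun p q μ := by
  rw [IndepFun_iff_Indep]
  exact indep_of_indep_of_le_left
    (indep_of_indep_of_le_right (indep_cylE hμ hAB) hq.comap_le) hp.comap_le

lemma integral_mul_real_cylE (hμ : ProdHyp μ₀ μ) {A B : Set I} (hAB : Disjoint A B)
    {p q : (I → X₀) → ℝ}
    (hp : Measurable[cylinderEvents A] p) (hq : Measurable[cylinderEvents B] q)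
    (hp2 : MemLp p 2 μ) (hq2 : MemLp q 2 μ) :
    ∫ x, p x * q x ∂μ = (∫ x, p x ∂μ) * ∫ x, q x ∂μ := by
  have hInd : IndepFun p q μ := indepFun_of_cylE hμ hAB hp hq
  have h := hInd.integral_mul_eq_mul_integral (hp2.integrable one_le_two).aestronglyMeasurable
    (hq2.integrable one_le_two).aestronglyMeasurable
  simpa [Pi.mul_apply] using h

lemma integral_mul_cylE (hμ : ProdHyp μ₀ μ) {A B : Set I} (hAB : Disjoint A B)
    {p q : (I → X₀) → ℂ}
    (hpm : Measurable[cylinderEvents A] p) (hqm : Measurable[cylinderEvents B] q)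
    (hp2 : MemLp p 2 μ) (hq2 : MemLp q 2 μ) :
    ∫ x, p x * q x ∂μ = (∫ x, p x ∂μ) * ∫ x, q x ∂μ := by
  set pr : (I → X₀) → ℝ := fun x => (p x).re with hpr
  set pj : (I → X₀) → ℝ := fun x => (p x).im with hpj
  set qr : (I → X₀) → ℝ := fun x => (q x).re with hqr
  set qj : (I → X₀) → ℝ := fun x => (q x).im with hqj
  have hprm : Measurable[cylinderEvents A] pr := Complex.measurable_re.comp hpm
  have hpjm : Measurable[cylinderEvents A] pj := Complex.measurable_im.comp hpm
  have hqrm : Measurable[cylinderEvents B] qr := Complex.measurable_re.comp hqm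
  have hqjm : Measurable[cylinderEvents B] qj := Complex.measurable_im.comp hqm
  have hpr2 : MemLp pr 2 μ := hp2.re
  have hpj2 : MemLp pj 2 μ := hp2.im
  have hqr2 : MemLp qr 2 μ := hq2.re
  have hqj2 : MemLp qj 2 μ := hq2.im
  have hmul : ∀ (a b : (I → X₀) → ℝ), MemLp a 2 μ → MemLp b 2 μ →
      Integrable (fun x => a x * b x) μ := by
    intro a b ha hb
    have h := hb.smul (φ := a) (r := 1) ha
    exact memLp_one_iff_integrable.mp h
  have key : ∀ (a b : (I → X₀) → ℝ), Measurable[cylinderEvents A] a →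
      Measurable[cylinderEvents B] b → MemLp a 2 μ → MemLp b 2 μ →
      ∫ x, a x * b x ∂μ = (∫ x, a x ∂μ) * ∫ x, b x ∂μ :=
    fun a b ha hb h2a h2b => integral_mul_real_cylE hμ hAB ha hb h2a h2b
  have hPQ : ∀ x, p x * q x =
      ((pr x * qr x : ℝ) : ℂ) - ((pj x * qj x : ℝ) : ℂ) +
        (((pr x * qj x : ℝ) : ℂ) + ((pj x * qr x : ℝ) : ℂ)) * Complex.I := by
    intro x
    apply Complex.ext <;>
      simp [Complex.mul_re, Complex.mul_im, hpr, hpj, hqr, hqj]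
  have hsplitp : ∀ x, p x = ((pr x : ℝ) : ℂ) + ((pj x : ℝ) : ℂ) * Complex.I :=
    fun x => (Complex.re_add_im (p x)).symm
  have hsplitq : ∀ x, q x = ((qr x : ℝ) : ℂ) + ((qj x : ℝ) : ℂ) * Complex.I :=
    fun x => (Complex.re_add_im (q x)).symm
  have hint1 : Integrable (fun x => pr x * qr x) μ := hmul _ _ hpr2 hqr2
  have hint2 : Integrable (fun x => pj x * qj x) μ := hmul _ _ hpj2 hqj2
  have hint3 : Integrable (fun x => pr x * qj x) μ := hmul _ _ hpr2 hqj2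
  have hint4 : Integrable (fun x => pj x * qr x) μ := hmul _ _ hpj2 hqr2
  have hc1 : Integrable (fun x => ((pr x * qr x : ℝ) : ℂ)) μ := hint1.ofReal
  have hc2 : Integrable (fun x => ((pj x * qj x : ℝ) : ℂ)) μ := hint2.ofReal
  have hc3 : Integrable (fun x => ((pr x * qj x : ℝ) : ℂ)) μ := hint3.ofReal
  have hc4 : Integrable (fun x => ((pj x * qr x : ℝ) : ℂ)) μ := hint4.ofReal
  have iOfReal : ∀ (f : (I → X₀) → ℝ), Integrable f μ →
      ∫ x, ((f x : ℝ) : ℂ) ∂μ = ((∫ x, f x ∂μ : ℝ) : ℂ) := fun f hf => integral_ofReal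
  have hd1 : Integrable (fun x => ((pr x * qr x : ℝ) : ℂ) - ((pj x * qj x : ℝ) : ℂ)) μ :=
    hc1.sub hc2
  have hd2 : Integrable
      (fun x => (((pr x * qj x : ℝ) : ℂ) + ((pj x * qr x : ℝ) : ℂ)) * Complex.I) μ :=
    (hc3.add hc4).mul_const _
  have e1 : ∫ x, p x * q x ∂μ =
      ((∫ x, pr x * qr x ∂μ : ℝ) : ℂ) - ((∫ x, pj x * qj x ∂μ : ℝ) : ℂ) +
        (((∫ x, pr x * qj x ∂μ : ℝ) : ℂ) + ((∫ x, pj x * qr x ∂μ : ℝ) : ℂ)) * Complex.I := by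
    rw [integral_congr_ae (Eventually.of_forall hPQ)]
    rw [integral_add hd1 hd2, integral_sub hc1 hc2, integral_mul_const, integral_add hc3 hc4,
      iOfReal _ hint1, iOfReal _ hint2, iOfReal _ hint3, iOfReal _ hint4]
  have hcr : Integrable (fun x => ((pr x : ℝ) : ℂ)) μ := (hpr2.integrable one_le_two).ofReal
  have hcj : Integrable (fun x => ((pj x : ℝ) : ℂ) * Complex.I) μ :=
    ((hpj2.integrable one_le_two).ofReal).mul_const _
  have hcr' : Integrable (fun x => ((qr x : ℝ) : ℂ)) μ := (hqr2.integrable one_le_two).ofReal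
  have hcj' : Integrable (fun x => ((qj x : ℝ) : ℂ) * Complex.I) μ :=
    ((hqj2.integrable one_le_two).ofReal).mul_const _
  have e2 : ∫ x, p x ∂μ = ((∫ x, pr x ∂μ : ℝ) : ℂ) + ((∫ x, pj x ∂μ : ℝ) : ℂ) * Complex.I := by
    rw [integral_congr_ae (Eventually.of_forall hsplitp)]
    rw [integral_add hcr hcj, integral_mul_const,
      iOfReal _ (hpr2.integrable one_le_two), iOfReal _ (hpj2.integrable one_le_two)]
  have e3 : ∫ x, q x ∂μ = ((∫ x, qr x ∂μ : ℝ) : ℂ) + ((∫ x, qj x ∂μ : ℝ) : ℂ) * Complex.I := by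
    rw [integral_congr_ae (Eventually.of_forall hsplitq)]
    rw [integral_add hcr' hcj', integral_mul_const,
      iOfReal _ (hqr2.integrable one_le_two), iOfReal _ (hqj2.integrable one_le_two)]
  rw [e1, e2, e3, key _ _ hprm hqrm hpr2 hqr2, key _ _ hpjm hqjm hpj2 hqj2,
    key _ _ hprm hqjm hpr2 hqj2, key _ _ hpjm hqrm hpj2 hqr2]
  apply Complex.ext <;> simp [Complex.mul_re, Complex.mul_im]

lemma exists_cylE_approx {E : Set (I → X₀)} (hE : MeasurableSet E) :
    ∀ ε : ℝ≥0∞, 0 < ε → ∃ (F : Finset I) (A : Set (I → X₀)),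
      MeasurableSet[cylinderEvents (↑F : Set I)] A ∧ μ (symmDiff E A) < ε := by
  classical
  refine MeasurableSpace.induction_on_inter
    (C := fun E _ => ∀ ε : ℝ≥0∞, 0 < ε → ∃ (F : Finset I) (A : Set (I → X₀)),
      MeasurableSet[cylinderEvents (↑F : Set I)] A ∧ μ (symmDiff E A) < ε)
    pi_eq_generateFrom_rect isPiSystem_rect ?_ ?_ ?_ ?_ E hE
  · intro ε hε
    exact ⟨∅, ∅, @MeasurableSet.empty _ (cylinderEvents (↑(∅ : Finset I) : Set I)),
      by simpa [symmDiff_self] using hε⟩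
  · rintro t ⟨s, f, hf, rfl⟩ ε hε
    exact ⟨s, _, measurableSet_rect_cylE hf, by simpa [symmDiff_self] using hε⟩
  · intro t htm iht ε hε
    obtain ⟨F, A, hA, hd⟩ := iht ε hε
    exact ⟨F, Aᶜ, hA.compl, by rwa [compl_symmDiff_compl]⟩
  · intro f hfd hfm ihf ε hε
    rcases eq_top_or_lt_top ε with rfl | hεtop
    · exact ⟨∅, ∅, @MeasurableSet.empty _ (cylinderEvents (↑(∅ : Finset I) : Set I)),
        measure_lt_top μ _⟩
    have hε2 : (0 : ℝ≥0∞) < ε / 2 := ENNReal.div_pos hε.ne' (by norm_num)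
    -- find N with small tail
    set D : ℕ → Set (I → X₀) := fun N => (⋃ n, f n) \ ⋃ n ∈ Finset.range N, f n with hD
    have hDanti : Antitone D := by
      intro a b hab
      exact diff_subset_diff_right (biUnion_subset_biUnion_left
        (fun n hn => Finset.mem_range.mpr (lt_of_lt_of_le (Finset.mem_range.mp hn) hab)))
    have hDm : ∀ N, NullMeasurableSet (D N) μ := by
      intro N
      exact (MeasurableSet.iUnion hfm |>.diff
        (MeasurableSet.biUnion (Finset.range N).countable_toSet fun n _ => hfm n))
        |>.nullMeasurableSet
    have hDint : ⋂ N, D N = ∅ := by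
      ext x
      simp only [mem_iInter, mem_empty_iff_false, iff_false, not_forall]
      by_cases hx : x ∈ ⋃ n, f n
      · obtain ⟨n, hn⟩ := mem_iUnion.mp hx
        exact ⟨n + 1, fun h => h.2 (mem_biUnion (Finset.mem_range.mpr (Nat.lt_succ_self n)) hn)⟩
      · exact ⟨0, fun h => hx h.1⟩
    have htend : Tendsto (μ ∘ D) atTop (𝓝 0) := by
      have := tendsto_measure_iInter_atTop hDm hDanti ⟨0, (measure_lt_top μ _).ne⟩
      rwa [hDint, measure_empty] at this
    have hev : ∀ᶠ N in atTop, μ (D N) < ε / 2 := htend.eventually_lt_const hε2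
    obtain ⟨N, hN⟩ := hev.exists
    -- approximate each piece
    set δ : ℝ≥0∞ := (ε / 2) / (N + 1) with hδdef
    have hδ : 0 < δ := ENNReal.div_pos hε2.ne' (by simp)
    choose F' A' hA' hμA' using fun n => ihf n δ hδ
    refine ⟨(Finset.range N).biUnion F', ⋃ n ∈ Finset.range N, A' n, ?_, ?_⟩
    · refine MeasurableSet.biUnion (Finset.range N).countable_toSet fun n hn => ?_
      refine cylinderEvents_mono ?_ _ (hA' n)
      exact_mod_cast Finset.coe_subset.mpr (Finset.subset_biUnion_of_mem F' hn)
    · have hsub : symmDiff (⋃ n, f n) (⋃ n ∈ Finset.range N, A' n) ⊆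
          D N ∪ ⋃ n ∈ Finset.range N, symmDiff (f n) (A' n) := by
        intro x hx
        rcases hx with ⟨hx1, hx2⟩ | ⟨hx1, hx2⟩
        · by_cases hxS : x ∈ ⋃ n ∈ Finset.range N, f n
          · simp only [mem_iUnion, exists_prop] at hxS
            obtain ⟨n, hn, hxn⟩ := hxS
            refine Or.inr (mem_biUnion hn ?_)
            have hxA : x ∉ A' n := fun h => hx2 (mem_biUnion hn h)
            exact Or.inl ⟨hxn, hxA⟩
          · exact Or.inl ⟨hx1, hxS⟩
        · simp only [mem_iUnion, exists_prop] at hx1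
          obtain ⟨n, hn, hxn⟩ := hx1
          refine Or.inr (mem_biUnion hn ?_)
          exact Or.inr ⟨hxn, fun h => hx2 (mem_iUnion.mpr ⟨n, h⟩)⟩
      calc μ (symmDiff (⋃ n, f n) (⋃ n ∈ Finset.range N, A' n))
          ≤ μ (D N ∪ ⋃ n ∈ Finset.range N, symmDiff (f n) (A' n)) := measure_mono hsub
        _ ≤ μ (D N) + μ (⋃ n ∈ Finset.range N, symmDiff (f n) (A' n)) := measure_union_le _ _
        _ ≤ μ (D N) + ∑ n ∈ Finset.range N, μ (symmDiff (f n) (A' n)) := by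
            gcongr
            exact measure_biUnion_finset_le _ _
        _ ≤ μ (D N) + ∑ n ∈ Finset.range N, δ := by
            gcongr with n hn
            exact (hμA' n).le
        _ = μ (D N) + N * δ := by simp [Finset.sum_const, mul_comm]
        _ ≤ μ (D N) + (N + 1) * δ := by
            gcongr
            exact le_self_add
        _ = μ (D N) + ((N : ℝ≥0∞) + 1) * ((ε / 2) / ((N : ℝ≥0∞) + 1)) := by rw [hδdef]
        _ = μ (D N) + ε / 2 := by
            rw [ENNReal.mul_div_cancel' (by simp) (by simp)]
        _ < ε / 2 + ε / 2 := by
            exact ENNReal.add_lt_add_right (by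
              simp [ENNReal.div_eq_top, hεtop.ne]) hN
        _ = ε := ENNReal.add_halves ε

/-- The set of `L²` elements having a representative measurable with respect to finitely
many coordinates. -/
def cylD (μ : Measure (I → X₀)) : Set (Lp ℂ 2 μ) :=
  {u | ∃ (F : Finset I) (u₀ : (I → X₀) → ℂ),
    Measurable[cylinderEvents (↑F : Set I)] u₀ ∧ ⇑u =ᵐ[μ] u₀}

lemma mem_closure_cylD (f : Lp ℂ 2 μ) : f ∈ closure (cylD μ) := by
  classical
  refine Lp.induction (E := ℂ) (p := 2) (by norm_num) (fun f => f ∈ closure (cylD μ))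
    ?_ ?_ isClosed_closure f
  · -- indicators
    intro c s hs hμs
    refine Metric.mem_closure_iff.mpr fun ε hε => ?_
    set δ : ℝ≥0∞ := (ENNReal.ofReal (ε / 2) / ((‖c‖₊ : ℝ≥0∞) + 1)) ^ (2 : ℕ) with hδdef
    have hδ : 0 < δ := by
      apply ENNReal.pow_pos
      exact ENNReal.div_pos (by simp [ENNReal.ofReal_eq_zero]; linarith) (by simp)
    obtain ⟨F, A, hA, hμd⟩ := exists_cylE_approx (μ := μ) hs δ hδ
    have hAp : MeasurableSet A := cylinderEvents_le_pi _ hA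
    refine ⟨indicatorConstLp 2 hAp (measure_ne_top μ A) c,
      ⟨F, A.indicator fun _ => c, measurable_const.indicator hA, indicatorConstLp_coeFn⟩, ?_⟩
    rw [Lp.simpleFunc.coe_indicatorConst, Lp.dist_def]
    have h1 : (⇑(indicatorConstLp 2 hs hμs.ne c) - ⇑(indicatorConstLp 2 hAp (measure_ne_top μ A) c))
        =ᵐ[μ] fun x => s.indicator (fun _ => c) x - A.indicator (fun _ => c) x := by
      filter_upwards [indicatorConstLp_coeFn (μ := μ) (p := 2) (hs := hs) (hμs := hμs.ne) (c := c),
        indicatorConstLp_coeFn (μ := μ) (p := 2) (hs := hAp) (hμs := measure_ne_top μ A) (c := c)]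
        with x hx1 hx2
      simp [Pi.sub_apply, hx1, hx2]
    have hkey : eLpNorm (⇑(indicatorConstLp 2 hs hμs.ne c) -
        ⇑(indicatorConstLp 2 hAp (measure_ne_top μ A) c)) 2 μ ≤ ENNReal.ofReal (ε / 2) := by
      rw [eLpNorm_congr_ae h1]
      have h2 : eLpNorm (fun x => s.indicator (fun _ => c) x - A.indicator (fun _ => c) x) 2 μ
          ≤ eLpNorm ((symmDiff s A).indicator fun _ => c) 2 μ := by
        apply eLpNorm_mono fun x => ?_
        by_cases hxs : x ∈ s <;> by_cases hxA : x ∈ A <;>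
          simp [Set.indicator_apply, hxs, hxA, Set.mem_symmDiff]
      refine h2.trans ?_
      rw [eLpNorm_indicator_const (hs.symmDiff hAp) (by norm_num) (by norm_num)]
      calc (‖c‖₊ : ℝ≥0∞) * μ (symmDiff s A) ^ (1 / (2 : ℝ≥0∞).toReal)
          ≤ (‖c‖₊ : ℝ≥0∞) * δ ^ (1 / (2 : ℝ≥0∞).toReal) := by
            exact mul_le_mul_right (ENNReal.rpow_le_rpow hμd.le (by norm_num)) _
        _ = (‖c‖₊ : ℝ≥0∞) * (ENNReal.ofReal (ε / 2) / ((‖c‖₊ : ℝ≥0∞) + 1)) := by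
            rw [hδdef, ← ENNReal.rpow_natCast, ← ENNReal.rpow_mul]
            norm_num
        _ ≤ ((‖c‖₊ : ℝ≥0∞) + 1) * (ENNReal.ofReal (ε / 2) / ((‖c‖₊ : ℝ≥0∞) + 1)) := by
            gcongr
            exact le_self_add
        _ = ENNReal.ofReal (ε / 2) := ENNReal.mul_div_cancel' (by simp) (by simp)
    have := ENNReal.toReal_le_of_le_ofReal (by linarith : (0:ℝ) ≤ ε / 2) hkey
    linarith
  · -- additivity
    intro f g hf hg hdisj hfc hgc
    refine Metric.mem_closure_iff.mpr fun ε hε => ?_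
    obtain ⟨u, hu, hdu⟩ := Metric.mem_closure_iff.mp hfc (ε / 2) (by linarith)
    obtain ⟨v, hv, hdv⟩ := Metric.mem_closure_iff.mp hgc (ε / 2) (by linarith)
    obtain ⟨Fu, u₀, hu₀, hue⟩ := hu
    obtain ⟨Fv, v₀, hv₀, hve⟩ := hv
    refine ⟨u + v, ⟨Fu ∪ Fv, u₀ + v₀, ?_, ?_⟩, ?_⟩
    · exact ((hu₀.mono (cylinderEvents_mono (Finset.coe_subset.mpr
        Finset.subset_union_left)) le_rfl).add
        (hv₀.mono (cylinderEvents_mono (Finset.coe_subset.mpr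
          Finset.subset_union_right)) le_rfl))
    · exact (Lp.coeFn_add u v).trans (hue.add hve)
    · calc dist (hf.toLp f + hg.toLp g) (u + v) ≤ dist (hf.toLp f) u + dist (hg.toLp g) v :=
          dist_add_add_le _ _ _ _
        _ < ε / 2 + ε / 2 := by exact add_lt_add hdu hdv
        _ = ε := add_halves ε

lemma integrable_L2 (w : Lp ℂ 2 μ) : Integrable ⇑w μ := (Lp.memLp w).integrable one_le_two

/-- The constant-one function in `L²`. -/
def oneL2 (μ : Measure (I → X₀)) [IsProbabilityMeasure μ] : Lp ℂ 2 μ :=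
  (memLp_const (1 : ℂ)).toLp _

lemma oneL2_coeFn : ⇑(oneL2 μ) =ᵐ[μ] fun _ => (1 : ℂ) := MemLp.coeFn_toLp _

lemma oneL2_norm : ‖oneL2 (μ := μ)‖ = 1 := by
  rw [oneL2, Lp.norm_toLp, eLpNorm_const _ (by norm_num) (IsProbabilityMeasure.ne_zero μ)]
  simp

lemma inner_oneL2 (w : Lp ℂ 2 μ) : inner (𝕜 := ℂ) (oneL2 μ) w = ∫ x, w x ∂μ := by
  rw [L2.inner_def]
  refine integral_congr_ae ?_
  filter_upwards [oneL2_coeFn (μ := μ)] with x hx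
  rw [RCLike.inner_apply', hx, map_one, one_mul]

lemma norm_integral_le_L2 (w : Lp ℂ 2 μ) : ‖∫ x, w x ∂μ‖ ≤ ‖w‖ := by
  rw [← inner_oneL2]
  calc ‖inner (𝕜 := ℂ) (oneL2 μ) w‖ ≤ ‖oneL2 (μ := μ)‖ * ‖w‖ := norm_inner_le_norm _ _
    _ = ‖w‖ := by rw [oneL2_norm, one_mul]

lemma integral_sub_L2 (a b : Lp ℂ 2 μ) :
    ∫ x, (⇑(a - b)) x ∂μ = ∫ x, a x ∂μ - ∫ x, b x ∂μ := by
  have hsub : ⇑(a - b) =ᵐ[μ] fun x => a x - b x := Lp.coeFn_sub a b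
  rw [integral_congr_ae hsub, integral_sub (integrable_L2 a) (integrable_L2 b)]

section Koopman

variable {Γ : Type*} [Group Γ] [MulAction Γ I]

/-- The Koopman operator of the generalized Bernoulli shift. -/
def Koop (hμ : ProdHyp μ₀ μ) (γ : Γ) : Lp ℂ 2 μ →ₗ[ℂ] Lp ℂ 2 μ :=
  Lp.compMeasurePreservingₗ ℂ _ (measurePreserving_shift hμ γ)

lemma Koop_coeFn (hμ : ProdHyp μ₀ μ) (γ : Γ) (u : Lp ℂ 2 μ) :
    ⇑(Koop hμ γ u) =ᵐ[μ] fun x => u (fun i => x (γ⁻¹ • i)) :=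
  Lp.coeFn_compMeasurePreserving u _

lemma Koop_norm (hμ : ProdHyp μ₀ μ) (γ : Γ) (u : Lp ℂ 2 μ) :
    ‖Koop hμ γ u‖ = ‖u‖ :=
  Lp.norm_compMeasurePreserving u _

lemma Koop_inner_eq (hμ : ProdHyp μ₀ μ) (γ : Γ) {Fu Fv : Finset I}
    (hdisj : ∀ i ∈ Fu, γ⁻¹ • i ∉ Fv)
    {u v : Lp ℂ 2 μ} {u₀ v₀ : (I → X₀) → ℂ}
    (hu₀ : Measurable[cylinderEvents (↑Fu : Set I)] u₀) (hue : ⇑u =ᵐ[μ] u₀)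
    (hv₀ : Measurable[cylinderEvents (↑Fv : Set I)] v₀) (hve : ⇑v =ᵐ[μ] v₀) :
    inner (𝕜 := ℂ) (Koop hμ γ u) v =
      (starRingEnd ℂ) (∫ x, u x ∂μ) * ∫ x, v x ∂μ := by
  classical
  have hT := measurePreserving_shift hμ γ
  set p : (I → X₀) → ℂ := fun x => (starRingEnd ℂ) (u₀ (fun i => x (γ⁻¹ • i))) with hp
  have hTc : @Measurable _ _ (cylinderEvents (↑(Fu.image fun i => γ⁻¹ • i) : Set I))
      (cylinderEvents (↑Fu : Set I)) (fun (x : I → X₀) (i : I) => x (γ⁻¹ • i)) := by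
    rw [measurable_cylinderEvents_iff]
    intro i hi
    exact measurable_cylinderEvent_apply
      (by exact_mod_cast Finset.mem_image_of_mem _ (by exact_mod_cast hi))
  have hpA : Measurable[cylinderEvents (↑(Fu.image fun i => γ⁻¹ • i) : Set I)] p :=
    (RCLike.continuous_conj.measurable).comp (hu₀.comp hTc)
  have hdisj' : Disjoint (↑(Fu.image fun i => γ⁻¹ • i) : Set I) (↑Fv : Set I) := by
    rw [Set.disjoint_left]
    intro a ha hfv
    simp only [Finset.coe_image, Set.mem_image, Finset.mem_coe] at ha
    obtain ⟨i, hi, rfl⟩ := ha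
    exact hdisj i hi (by exact_mod_cast hfv)
  have hKcoe : ⇑(Koop hμ γ u) =ᵐ[μ] fun x => u₀ (fun i => x (γ⁻¹ • i)) :=
    (Koop_coeFn hμ γ u).trans (hT.quasiMeasurePreserving.ae_eq_comp hue)
  have h1 : MemLp (fun x => u₀ (fun i => x (γ⁻¹ • i))) 2 μ := (Lp.memLp _).ae_eq hKcoe
  have hp2 : MemLp p 2 μ :=
    MemLp.of_le_mul (c := 1) h1 (RCLike.continuous_conj.comp_aestronglyMeasurable h1.1)
      (Eventually.of_forall fun x => by simp [hp])
  have hv2 : MemLp v₀ 2 μ := (Lp.memLp v).ae_eq hve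
  have hu₀m : AEStronglyMeasurable u₀ μ :=
    (hu₀.mono cylinderEvents_le_pi le_rfl).aestronglyMeasurable
  have hTint : ∫ x, u₀ (fun i => x (γ⁻¹ • i)) ∂μ = ∫ y, u₀ y ∂μ := by
    have h := MeasureTheory.integral_map (φ := fun (x : I → X₀) (i : I) => x (γ⁻¹ • i))
      hT.measurable.aemeasurable (f := u₀) (by rwa [hT.map_eq])
    rw [hT.map_eq] at h
    exact h.symm
  calc inner (𝕜 := ℂ) (Koop hμ γ u) v
      = ∫ x, (starRingEnd ℂ) ((Koop hμ γ u) x) * v x ∂μ := by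
        rw [L2.inner_def]
        refine integral_congr_ae (Eventually.of_forall fun x => ?_)
        simp only [RCLike.inner_apply']
    _ = ∫ x, p x * v₀ x ∂μ := by
        refine integral_congr_ae ?_
        filter_upwards [hKcoe, hve] with x hx1 hx2
        rw [hx1, hx2]
    _ = (∫ x, p x ∂μ) * ∫ x, v₀ x ∂μ := integral_mul_cylE hμ hdisj' hpA hv₀ hp2 hv2
    _ = (starRingEnd ℂ) (∫ x, u x ∂μ) * ∫ x, v x ∂μ := by
        rw [integral_congr_ae hue, integral_congr_ae hve]
        congr 1
        rw [hp]
        rw [integral_conj, hTint]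

lemma Koop_inner_tendsto (hμ : ProdHyp μ₀ μ) (g : ℕ → Γ) (Fs : ℕ → Finset I)
    (hg : ∀ n, ∀ i ∈ Fs n, (g n) • i ∉ Fs n)
    (hexh : ∀ s : Finset I, ∀ᶠ n in atTop, s ⊆ Fs n) (u v : Lp ℂ 2 μ) :
    Tendsto (fun n => inner (𝕜 := ℂ) (Koop hμ (g n) u) v) atTop
      (𝓝 ((starRingEnd ℂ) (∫ x, u x ∂μ) * ∫ x, v x ∂μ)) := by
  classical
  rw [Metric.tendsto_atTop]
  intro ε hε
  set M : ℝ := ‖u‖ + ‖v‖ + 1 with hM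
  have hMpos : 0 < M := by positivity
  set δ : ℝ := min 1 (ε / (2 * M + 1)) with hδdef
  have hδpos : 0 < δ := lt_min one_pos (div_pos hε (by positivity))
  have hδ1 : δ ≤ 1 := min_le_left _ _
  have hδ2 : δ * (2 * M + 1) ≤ ε := by
    have h := min_le_right 1 (ε / (2 * M + 1))
    have h2 : (0:ℝ) < 2 * M + 1 := by positivity
    calc δ * (2 * M + 1) ≤ (ε / (2 * M + 1)) * (2 * M + 1) :=
          mul_le_mul_of_nonneg_right h h2.le
      _ = ε := div_mul_cancel₀ ε h2.ne'
  obtain ⟨uu, hu, hdu⟩ := Metric.mem_closure_iff.mp (mem_closure_cylD u) δ hδpos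
  obtain ⟨vv, hv, hdv⟩ := Metric.mem_closure_iff.mp (mem_closure_cylD v) δ hδpos
  obtain ⟨Fu, u₀, hu₀, hue⟩ := hu
  obtain ⟨Fv, v₀, hv₀, hve⟩ := hv
  obtain ⟨N, hN⟩ := Filter.eventually_atTop.mp (hexh (Fu ∪ Fv))
  refine ⟨N, fun n hn => ?_⟩
  have hsub := hN n hn
  have hdisj : ∀ i ∈ Fu, (g n)⁻¹ • i ∉ Fv := by
    intro i hi hmem
    have h2 : (g n)⁻¹ • i ∈ Fs n := hsub (Finset.mem_union_right _ hmem)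
    exact hg n _ h2 (by rw [smul_inv_smul]; exact hsub (Finset.mem_union_left _ hi))
  have hexact := Koop_inner_eq hμ (g n) hdisj hu₀ hue hv₀ hve
  rw [dist_eq_norm]
  have hud : ‖u - uu‖ ≤ δ := by rw [← dist_eq_norm]; exact hdu.le
  have hvd : ‖v - vv‖ ≤ δ := by rw [← dist_eq_norm]; exact hdv.le
  have huu_norm : ‖uu‖ ≤ ‖u‖ + δ := by
    have h := norm_sub_norm_le uu u
    have : ‖uu - u‖ = ‖u - uu‖ := norm_sub_rev _ _
    linarith
  have hvv_norm : ‖vv‖ ≤ ‖v‖ + δ := by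
    have h := norm_sub_norm_le vv v
    have : ‖vv - v‖ = ‖v - vv‖ := norm_sub_rev _ _
    linarith
  have hIdu : ‖∫ x, uu x ∂μ - ∫ x, u x ∂μ‖ ≤ δ := by
    rw [← integral_sub_L2]
    calc ‖∫ x, (⇑(uu - u)) x ∂μ‖ ≤ ‖uu - u‖ := norm_integral_le_L2 _
      _ = ‖u - uu‖ := norm_sub_rev _ _
      _ ≤ δ := hud
  have hIdv : ‖∫ x, vv x ∂μ - ∫ x, v x ∂μ‖ ≤ δ := by
    rw [← integral_sub_L2]
    calc ‖∫ x, (⇑(vv - v)) x ∂μ‖ ≤ ‖vv - v‖ := norm_integral_le_L2 _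
      _ = ‖v - vv‖ := norm_sub_rev _ _
      _ ≤ δ := hvd
  have hIvv : ‖∫ x, vv x ∂μ‖ ≤ ‖v‖ + δ := (norm_integral_le_L2 vv).trans hvv_norm
  have hIu : ‖∫ x, u x ∂μ‖ ≤ ‖u‖ := norm_integral_le_L2 u
  have hsplit : inner (𝕜 := ℂ) (Koop hμ (g n) u) v -
      (starRingEnd ℂ) (∫ x, u x ∂μ) * ∫ x, v x ∂μ
      = inner (𝕜 := ℂ) (Koop hμ (g n) (u - uu)) v
        + inner (𝕜 := ℂ) (Koop hμ (g n) uu) (v - vv)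
        + (((starRingEnd ℂ) (∫ x, uu x ∂μ) - (starRingEnd ℂ) (∫ x, u x ∂μ)) * ∫ x, vv x ∂μ
          + (starRingEnd ℂ) (∫ x, u x ∂μ) * (∫ x, vv x ∂μ - ∫ x, v x ∂μ)) := by
    have h1 : Koop hμ (g n) u = Koop hμ (g n) (u - uu) + Koop hμ (g n) uu := by
      rw [← map_add]
      congr 1
      abel
    have h2 : inner (𝕜 := ℂ) (Koop hμ (g n) uu) v
        = inner (𝕜 := ℂ) (Koop hμ (g n) uu) (v - vv)
          + inner (𝕜 := ℂ) (Koop hμ (g n) uu) vv := by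
      rw [← inner_add_right]
      congr 1
      abel
    rw [h1, inner_add_left, h2, hexact]
    ring
  rw [hsplit]
  have b1 : ‖inner (𝕜 := ℂ) (Koop hμ (g n) (u - uu)) v‖ ≤ δ * ‖v‖ := by
    calc ‖inner (𝕜 := ℂ) (Koop hμ (g n) (u - uu)) v‖
        ≤ ‖Koop hμ (g n) (u - uu)‖ * ‖v‖ := norm_inner_le_norm _ _
      _ = ‖u - uu‖ * ‖v‖ := by rw [Koop_norm]
      _ ≤ δ * ‖v‖ := mul_le_mul_of_nonneg_right hud (norm_nonneg _)
  have b2 : ‖inner (𝕜 := ℂ) (Koop hμ (g n) uu) (v - vv)‖ ≤ (‖u‖ + δ) * δ := by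
    calc ‖inner (𝕜 := ℂ) (Koop hμ (g n) uu) (v - vv)‖
        ≤ ‖Koop hμ (g n) uu‖ * ‖v - vv‖ := norm_inner_le_norm _ _
      _ = ‖uu‖ * ‖v - vv‖ := by rw [Koop_norm]
      _ ≤ (‖u‖ + δ) * δ := by
          refine mul_le_mul huu_norm hvd (norm_nonneg _) (by positivity)
  have b3 : ‖((starRingEnd ℂ) (∫ x, uu x ∂μ) - (starRingEnd ℂ) (∫ x, u x ∂μ)) * ∫ x, vv x ∂μ‖
      ≤ δ * (‖v‖ + δ) := by
    rw [norm_mul, ← map_sub]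
    calc ‖(starRingEnd ℂ) (∫ x, uu x ∂μ - ∫ x, u x ∂μ)‖ * ‖∫ x, vv x ∂μ‖
        = ‖∫ x, uu x ∂μ - ∫ x, u x ∂μ‖ * ‖∫ x, vv x ∂μ‖ := by rw [RCLike.norm_conj]
      _ ≤ δ * (‖v‖ + δ) := mul_le_mul hIdu hIvv (norm_nonneg _) hδpos.le
  have b4 : ‖(starRingEnd ℂ) (∫ x, u x ∂μ) * (∫ x, vv x ∂μ - ∫ x, v x ∂μ)‖ ≤ ‖u‖ * δ := by
    rw [norm_mul, RCLike.norm_conj]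
    exact mul_le_mul hIu hIdv (norm_nonneg _) (norm_nonneg _)
  calc ‖inner (𝕜 := ℂ) (Koop hμ (g n) (u - uu)) v
        + inner (𝕜 := ℂ) (Koop hμ (g n) uu) (v - vv)
        + (((starRingEnd ℂ) (∫ x, uu x ∂μ) - (starRingEnd ℂ) (∫ x, u x ∂μ)) * ∫ x, vv x ∂μ
          + (starRingEnd ℂ) (∫ x, u x ∂μ) * (∫ x, vv x ∂μ - ∫ x, v x ∂μ))‖
      ≤ ‖inner (𝕜 := ℂ) (Koop hμ (g n) (u - uu)) v
          + inner (𝕜 := ℂ) (Koop hμ (g n) uu) (v - vv)‖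
        + ‖((starRingEnd ℂ) (∫ x, uu x ∂μ) - (starRingEnd ℂ) (∫ x, u x ∂μ)) * ∫ x, vv x ∂μ
          + (starRingEnd ℂ) (∫ x, u x ∂μ) * (∫ x, vv x ∂μ - ∫ x, v x ∂μ)‖ := norm_add_le _ _
    _ ≤ (‖inner (𝕜 := ℂ) (Koop hμ (g n) (u - uu)) v‖
          + ‖inner (𝕜 := ℂ) (Koop hμ (g n) uu) (v - vv)‖)
        + (‖((starRingEnd ℂ) (∫ x, uu x ∂μ) - (starRingEnd ℂ) (∫ x, u x ∂μ)) * ∫ x, vv x ∂μ‖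
          + ‖(starRingEnd ℂ) (∫ x, u x ∂μ) * (∫ x, vv x ∂μ - ∫ x, v x ∂μ)‖) := by
        gcongr <;> exact norm_add_le _ _
    _ ≤ (δ * ‖v‖ + (‖u‖ + δ) * δ) + (δ * (‖v‖ + δ) + ‖u‖ * δ) := by
        gcongr
    _ < ε := by nlinarith [norm_nonneg u, norm_nonneg v]

end Koopman

end Measure

/-- B. H. Neumann's lemma: a group acting with infinite orbits moves any finite set off
itself. -/
lemma exists_smul_disjoint {Γ : Type*} [Group Γ] [MulAction Γ I]
    (horb : ∀ i : I, (MulAction.orbit Γ i).Infinite) (F : Finset I) :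
    ∃ g : Γ, ∀ i ∈ F, g • i ∉ F := by
  classical
  by_contra hcon
  push_neg at hcon
  set H : I × I → Subgroup Γ := fun p => MulAction.stabilizer Γ p.1 with hH
  set g : I × I → Γ := fun p => if h : ∃ γ : Γ, γ • p.1 = p.2 then h.choose else 1 with hg
  have hcovers : ⋃ p ∈ (F ×ˢ F : Finset (I × I)), (g p) • (H p : Set Γ) = Set.univ := by
    refine Set.eq_univ_iff_forall.mpr fun γ => ?_
    obtain ⟨i, hi, hgi⟩ := hcon γ
    have hex : ∃ δ : Γ, δ • i = γ • i := ⟨γ, rfl⟩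
    have hpmem : ((i, γ • i) : I × I) ∈ (F ×ˢ F : Finset (I × I)) :=
      Finset.mem_product.mpr ⟨hi, hgi⟩
    refine Set.mem_biUnion hpmem ?_
    have hgeq : g (i, γ • i) • i = γ • i := by
      rw [hg]
      simp only [dif_pos hex]
      exact hex.choose_spec
    rw [mem_leftCoset_iff]
    show (g (i, γ • i))⁻¹ * γ ∈ MulAction.stabilizer Γ i
    rw [MulAction.mem_stabilizer_iff, mul_smul]
    calc (g (i, γ • i))⁻¹ • γ • i = (g (i, γ • i))⁻¹ • g (i, γ • i) • i := by rw [hgeq]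
      _ = i := inv_smul_smul _ _
  obtain ⟨p, hp, hfin⟩ := Subgroup.exists_finiteIndex_of_leftCoset_cover hcovers
  haveI : (MulAction.stabilizer Γ p.1).FiniteIndex := hfin
  haveI : Finite (Γ ⧸ MulAction.stabilizer Γ p.1) :=
    Subgroup.finite_quotient_of_finiteIndex
  haveI : Finite (MulAction.orbit Γ p.1) :=
    Finite.of_equiv _ (MulAction.orbitEquivQuotientStabilizer Γ p.1).symm
  exact horb p.1 (Set.toFinite _)

end BernoulliAux

end BernoulliAux

theorem stmt4 {Γ I X₀ : Type*} [Group Γ] [MulAction Γ I] [Countable Γ] [Countable I]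
    [MeasurableSpace X₀] [StandardBorelSpace X₀]
    (μ₀ : Measure X₀) [IsProbabilityMeasure μ₀]
    (μ : Measure (I → X₀)) [IsProbabilityMeasure μ]
    (hμ : ∀ (s : Finset I) (f : I → Set X₀), (∀ i, MeasurableSet (f i)) →
      μ {x : I → X₀ | ∀ i ∈ s, x i ∈ f i} = ∏ i ∈ s, μ₀ (f i))
    (horb : ∀ i : I, (MulAction.orbit Γ i).Infinite)
    (V : Submodule ℂ (Lp ℂ 2 μ)) (hV : FiniteDimensional ℂ V)
    (hinvV : ∀ g : Γ, ∀ f ∈ V, ∃ f' ∈ V,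
      (f' : (I → X₀) → ℂ) =ᵐ[μ] fun x : I → X₀ => f (fun i : I => x (g⁻¹ • i))) :
    ∀ f ∈ V, ∃ c : ℂ, (f : (I → X₀) → ℂ) =ᵐ[μ] fun _ => c := by
  classical
  have hProd : BernoulliAux.ProdHyp μ₀ μ := hμ
  haveI := hV
  intro f hf
  rcases isEmpty_or_nonempty I with hI | hI
  · -- empty index set: the space is a single point
    haveI : Subsingleton (I → X₀) := ⟨fun a b => funext fun i => (hI.false i).elim⟩
    refine ⟨f (fun i => (hI.false i).elim), Filter.Eventually.of_forall fun x => ?_⟩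
    rw [Subsingleton.elim x (fun i => (hI.false i).elim)]
  · -- infinite index set
    haveI : Infinite I := Set.infinite_univ_iff.mp
      (Set.Infinite.mono (Set.subset_univ _) (horb (Classical.arbitrary I)))
    obtain ⟨dI⟩ := nonempty_denumerable I
    haveI := dI
    set e : I ≃ ℕ := Denumerable.eqv I with he
    set Fs : ℕ → Finset I := fun n => (Finset.range n).image e.symm with hFs
    have hexh : ∀ s : Finset I, ∀ᶠ n in Filter.atTop, s ⊆ Fs n := by
      intro s
      refine Filter.eventually_atTop.mpr ⟨(s.sup e) + 1, fun n hn i hi => ?_⟩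
      refine Finset.mem_image.mpr ⟨e i, Finset.mem_range.mpr ?_, by simp⟩
      exact lt_of_lt_of_le (Nat.lt_succ_of_le (Finset.le_sup hi)) hn
    choose g hg using fun n => BernoulliAux.exists_smul_disjoint (Γ := Γ) horb (Fs n)
    set one : Lp ℂ 2 μ := BernoulliAux.oneL2 μ with hone
    have honece : ⇑one =ᵐ[μ] fun _ => (1 : ℂ) := BernoulliAux.oneL2_coeFn
    have hIone : ∫ x, one x ∂μ = 1 := by
      rw [integral_congr_ae honece]
      simp
    have hKone : ∀ γ : Γ, BernoulliAux.Koop hProd γ one = one := by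
      intro γ
      refine Lp.ext ?_
      refine ((BernoulliAux.Koop_coeFn hProd γ one).trans ?_).trans honece.symm
      exact (BernoulliAux.measurePreserving_shift hProd γ).quasiMeasurePreserving.ae_eq_comp
        honece
    set W : Submodule ℂ (Lp ℂ 2 μ) := V ⊔ (Submodule.span ℂ {one}) with hW
    haveI : FiniteDimensional ℂ W := Submodule.finiteDimensional_sup _ _
    have hWinv : ∀ γ : Γ, ∀ w ∈ W, BernoulliAux.Koop hProd γ w ∈ W := by
      intro γ w hw
      obtain ⟨a, ha, b, hb, rfl⟩ := Submodule.mem_sup.mp hw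
      rw [map_add]
      refine Submodule.add_mem _ ?_ ?_
      · obtain ⟨f', hf', heq⟩ := hinvV γ a ha
        have hKa : BernoulliAux.Koop hProd γ a = f' :=
          Lp.ext ((BernoulliAux.Koop_coeFn hProd γ a).trans heq.symm)
        rw [hKa]
        exact Submodule.mem_sup_left hf'
      · obtain ⟨c, rfl⟩ := Submodule.mem_span_singleton.mp hb
        rw [_root_.map_smul, hKone]
        exact Submodule.mem_sup_right (Submodule.smul_mem _ _
          (Submodule.mem_span_singleton_self one))
    have hkey : ∀ w : Lp ℂ 2 μ, w ∈ W → ∫ x, w x ∂μ = 0 → w = 0 := by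
      intro w hw hw0
      by_contra hne
      haveI : ProperSpace W := FiniteDimensional.proper ℂ W
      set seq : ℕ → W := fun n => ⟨BernoulliAux.Koop hProd (g n) w, hWinv (g n) w hw⟩ with hseq
      have hnorm : ∀ n, ‖seq n‖ = ‖w‖ := by
        intro n
        have h1 : ‖seq n‖ = ‖BernoulliAux.Koop hProd (g n) w‖ := rfl
        rw [h1, BernoulliAux.Koop_norm]
      have hbdd : ∀ n, seq n ∈ Metric.closedBall (0 : W) ‖w‖ := fun n => by
        rw [Metric.mem_closedBall, dist_zero_right, hnorm]
      obtain ⟨L, _, φ, hφ, hconv⟩ := tendsto_subseq_of_bounded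
        (Metric.isBounded_closedBall (x := (0 : W)) (r := ‖w‖)) hbdd
      have hconvLp : Filter.Tendsto (fun k => BernoulliAux.Koop hProd (g (φ k)) w)
          Filter.atTop (𝓝 (L : Lp ℂ 2 μ)) :=
        (continuous_subtype_val.tendsto L).comp hconv
      have hmix := BernoulliAux.Koop_inner_tendsto hProd g Fs hg hexh w (L : Lp ℂ 2 μ)
      rw [hw0, map_zero, zero_mul] at hmix
      have hmixsub : Filter.Tendsto
          (fun k => inner (𝕜 := ℂ) (BernoulliAux.Koop hProd (g (φ k)) w) (L : Lp ℂ 2 μ))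
          Filter.atTop (𝓝 0) := hmix.comp hφ.tendsto_atTop
      have hinner : Filter.Tendsto
          (fun k => inner (𝕜 := ℂ) (BernoulliAux.Koop hProd (g (φ k)) w) (L : Lp ℂ 2 μ))
          Filter.atTop (𝓝 (inner (𝕜 := ℂ) (L : Lp ℂ 2 μ) (L : Lp ℂ 2 μ))) :=
        hconvLp.inner tendsto_const_nhds
      have hLL : inner (𝕜 := ℂ) (L : Lp ℂ 2 μ) (L : Lp ℂ 2 μ) = 0 :=
        tendsto_nhds_unique hinner hmixsub
      have hL0 : (L : Lp ℂ 2 μ) = 0 := inner_self_eq_zero.mp hLL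
      have hnormconv : Filter.Tendsto (fun k => ‖BernoulliAux.Koop hProd (g (φ k)) w‖)
          Filter.atTop (𝓝 ‖(L : Lp ℂ 2 μ)‖) := hconvLp.norm
      have heqn : (fun k => ‖BernoulliAux.Koop hProd (g (φ k)) w‖) = fun _ => ‖w‖ :=
        funext fun k => BernoulliAux.Koop_norm hProd _ _
      rw [heqn, hL0, norm_zero] at hnormconv
      have : ‖w‖ = 0 := tendsto_nhds_unique tendsto_const_nhds hnormconv
      exact hne (norm_eq_zero.mp this)
    set c : ℂ := ∫ x, f x ∂μ with hc
    have hfW : (f : Lp ℂ 2 μ) ∈ W := Submodule.mem_sup_left hf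
    have honeW : c • one ∈ W :=
      Submodule.mem_sup_right (Submodule.smul_mem _ _ (Submodule.mem_span_singleton_self one))
    have hwW : f - c • one ∈ W := Submodule.sub_mem _ hfW honeW
    have hint : ∫ x, (⇑(f - c • one)) x ∂μ = 0 := by
      have h1 : ⇑(f - c • one) =ᵐ[μ] fun x => f x - c * one x := by
        filter_upwards [Lp.coeFn_sub f (c • one), Lp.coeFn_smul c one] with x hx1 hx2
        rw [hx1]
        simp [hx2]
      rw [integral_congr_ae h1,
        integral_sub (BernoulliAux.integrable_L2 f)
          ((BernoulliAux.integrable_L2 one).const_mul c),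
        integral_const_mul, hIone, mul_one, ← hc, sub_self]
    have hzero := hkey _ hwW hint
    have hfc : (f : Lp ℂ 2 μ) = c • one := sub_eq_zero.mp hzero
    refine ⟨c, ?_⟩
    have hce : ⇑(f : Lp ℂ 2 μ) =ᵐ[μ] ⇑(c • one) := by rw [hfc]
    refine hce.trans ?_
    filter_upwards [Lp.coeFn_smul c one, honece] with x hx1 hx2
    rw [hx1]
    simp [hx2]
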